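/- Let m, r₀ > 0 and f(r) = m[(r + r₀)⁺ − r₀] (the MMK slackening function). Then the transform f̃(r) = (2/π)∫₀^π f(r sin x) sin x dx satisfies f̃(r) = m r for r ≥ −r₀, and f̃(r) = −(2m r₀/π)[(r/r₀) arcsin(r₀/r) + √(1 − (r₀/r)²)] for r ≤ −r₀. -/

import Mathlib

open Real

theorem stmt19 (m r₀ : ℝ) (hm : 0 < m) (hr₀ : 0 < r₀) (r : ℝ) :
    (-r₀ ≤ r →
      (2 / π) * ∫ x in (0:ℝ)..π,
          (m * (max (r * Real.sin x + r₀) 0 - r₀)) * Real.sin x = m * r) ∧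
    (r ≤ -r₀ →
      (2 / π) * ∫ x in (0:ℝ)..π,
          (m * (max (r * Real.sin x + r₀) 0 - r₀)) * Real.sin x
        = -(2 * m * r₀ / π) *
            ((r / r₀) * Real.arcsin (r₀ / r) + Real.sqrt (1 - (r₀ / r) ^ 2))) := by
  have hπ : (0:ℝ) < π := Real.pi_pos
  set F : ℝ → ℝ := fun x => (m * (max (r * Real.sin x + r₀) 0 - r₀)) * Real.sin x with hF
  have hcont : Continuous F := by fun_prop
  have hi : ∀ u v : ℝ, IntervalIntegrable F MeasureTheory.volume u v :=
    fun u v => hcont.intervalIntegrable u v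
  have hmono := Real.strictMonoOn_sin.monotoneOn
  constructor
  · intro hr
    have hcongr : Set.EqOn F (fun x => (m * r) * Real.sin x ^ 2) (Set.uIcc (0:ℝ) π) := by
      intro x hx
      rw [Set.uIcc_of_le hπ.le] at hx
      have h1 : 0 ≤ Real.sin x := Real.sin_nonneg_of_nonneg_of_le_pi hx.1 hx.2
      have h2 : Real.sin x ≤ 1 := Real.sin_le_one x
      have hmax : 0 ≤ r * Real.sin x + r₀ := by nlinarith
      simp only [hF, max_eq_left hmax]
      ring
    rw [intervalIntegral.integral_congr hcongr, intervalIntegral.integral_const_mul,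
      integral_sin_sq]
    simp only [Real.sin_zero, Real.sin_pi, Real.cos_zero, Real.cos_pi, zero_mul, mul_zero,
      sub_zero, zero_sub, neg_zero]
    field_simp
    ring
  · intro hr
    have hrneg : r < 0 := lt_of_le_of_lt hr (by linarith)
    set s : ℝ := -r₀ / r with hs
    have hs0 : 0 < s := div_pos_of_neg_of_neg (by linarith) hrneg
    have hs1 : s ≤ 1 := by
      rw [hs, div_le_one_of_neg hrneg]
      linarith
    set a : ℝ := Real.arcsin s with ha
    have hsa : Real.sin a = s := Real.sin_arcsin (by linarith) hs1
    have ha0 : 0 ≤ a := Real.arcsin_nonneg.mpr hs0.le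
    have ha2 : a ≤ π / 2 := Real.arcsin_le_pi_div_two s
    have hca : Real.cos a = Real.sqrt (1 - s ^ 2) := Real.cos_arcsin s
    have key : r * Real.sin a = -r₀ := by
      rw [hsa, hs]
      field_simp [hrneg.ne]
    -- sin x ≤ sin a on [0, a]
    have hle : ∀ x, 0 ≤ x → x ≤ a → Real.sin x ≤ Real.sin a := by
      intro x h0 h1
      exact hmono ⟨by linarith, by linarith⟩ ⟨by linarith, ha2⟩ h1
    -- sin a ≤ sin x on [a, π - a]
    have hge : ∀ x, a ≤ x → x ≤ π - a → Real.sin a ≤ Real.sin x := by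
      intro x h0 h1
      rcases le_or_gt x (π / 2) with hx | hx
      · exact hmono ⟨by linarith, ha2⟩ ⟨by linarith, hx⟩ h0
      · rw [← Real.sin_pi_sub x]
        exact hmono ⟨by linarith, ha2⟩ ⟨by linarith, by linarith⟩ (by linarith)
    -- first piece
    have hI1 : ∫ x in (0:ℝ)..a, F x = (m * r) * ((a - Real.sin a * Real.cos a) / 2) := by
      have hcongr : Set.EqOn F (fun x => (m * r) * Real.sin x ^ 2) (Set.uIcc (0:ℝ) a) := by
        intro x hx
        rw [Set.uIcc_of_le ha0] at hx
        have h1 : Real.sin x ≤ Real.sin a := hle x hx.1 hx.2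
        have hmax : 0 ≤ r * Real.sin x + r₀ := by nlinarith [key]
        simp only [hF, max_eq_left hmax]
        ring
      rw [intervalIntegral.integral_congr hcongr, intervalIntegral.integral_const_mul,
        integral_sin_sq]
      simp only [Real.sin_zero, Real.cos_zero, zero_mul, mul_zero, sub_zero, zero_sub]
      ring
    -- third piece
    have hI3 : ∫ x in (π - a)..π, F x = (m * r) * ((a - Real.sin a * Real.cos a) / 2) := by
      have hcongr : Set.EqOn F (fun x => (m * r) * Real.sin x ^ 2) (Set.uIcc (π - a) π) := by
        intro x hx
        rw [Set.uIcc_of_le (by linarith)] at hx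
        have h1 : Real.sin x ≤ Real.sin a := by
          rw [← Real.sin_pi_sub x]
          exact hle (π - x) (by linarith [hx.2]) (by linarith [hx.1])
        have hmax : 0 ≤ r * Real.sin x + r₀ := by nlinarith [key]
        simp only [hF, max_eq_left hmax]
        ring
      rw [intervalIntegral.integral_congr hcongr, intervalIntegral.integral_const_mul,
        integral_sin_sq]
      rw [Real.sin_pi_sub, Real.cos_pi_sub]
      simp only [Real.sin_pi, Real.cos_pi, zero_mul, mul_zero]
      ring
    -- middle piece
    have hI2 : ∫ x in a..(π - a), F x = -(m * r₀) * (2 * Real.cos a) := by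
      have hcongr : Set.EqOn F (fun x => (-(m * r₀)) * Real.sin x) (Set.uIcc a (π - a)) := by
        intro x hx
        rw [Set.uIcc_of_le (by linarith)] at hx
        have h1 : Real.sin a ≤ Real.sin x := hge x hx.1 hx.2
        have hmax : r * Real.sin x + r₀ ≤ 0 := by nlinarith [key]
        simp only [hF, max_eq_right hmax]
        ring
      rw [intervalIntegral.integral_congr hcongr, intervalIntegral.integral_const_mul,
        integral_sin]
      rw [Real.cos_pi_sub]
      ring
    have hsplit : (∫ x in (0:ℝ)..π, F x)
        = (∫ x in (0:ℝ)..a, F x) + (∫ x in a..(π - a), F x) + (∫ x in (π - a)..π, F x) := by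
      rw [intervalIntegral.integral_add_adjacent_intervals (hi 0 a) (hi a (π - a)),
        intervalIntegral.integral_add_adjacent_intervals (hi 0 (π - a)) (hi (π - a) π)]
    have harc : Real.arcsin (r₀ / r) = -a := by
      have : r₀ / r = -s := by rw [hs]; ring
      rw [this, Real.arcsin_neg, ha]
    have hsqrt : Real.sqrt (1 - (r₀ / r) ^ 2) = Real.cos a := by
      rw [hca]
      congr 1
      rw [hs]
      ring
    rw [hsplit, hI1, hI2, hI3, harc, hsqrt]
    have hrw : m * r * Real.sin a = m * -r₀ := by rw [mul_assoc, key]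
    field_simp
    linear_combination (-2 * Real.cos a) * key
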